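/- Let f : ℝ → ℝ satisfy: (i) f belongs to the Newton class; (ii) the limits of f at +∞ and −∞ are infinite and of opposite signs (either f(x) → +∞ as x → +∞ and f(x) → −∞ as x → −∞, or vice versa); (iii) f has at least four real roots. Then the modified Newton approximation function M_f has periodic points of every prime period: for every n ∈ ℕ there exists a ∈ ℝ with M_fⁿ(a) = a and M_fᵐ(a) ≠ a for all 1 ≤ m < n. -/

import Mathlib

open Set Filter Topology

/-- `f` belongs to the Newton class: `f` is twice continuously differentiable,
roots of `f` are simple, and roots of `f'` are simple. -/
def NewtonClass (f : ℝ → ℝ) : Prop :=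
  ContDiff ℝ 2 f ∧ (∀ x, f x = 0 → deriv f x ≠ 0) ∧
    (∀ x, deriv f x = 0 → deriv (deriv f) x ≠ 0)

/-- The classical Newton approximation function `N_f(x) = x - f(x)/f'(x)`. -/
noncomputable def newtonFun (f : ℝ → ℝ) (x : ℝ) : ℝ :=
  x - f x / deriv f x

/-- The modified Newton approximation function
`M_f(x) = N_f(x) - f(N_f(x))/f'(x)`. -/
noncomputable def modNewtonFun (f : ℝ → ℝ) (x : ℝ) : ℝ :=
  newtonFun f x - f (newtonFun f x) / deriv f x


lemma modNewton_fixed (f : ℝ → ℝ) (r : ℝ) (h : f r = 0) : modNewtonFun f r = r := by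
  have hN : newtonFun f r = r := by simp [newtonFun, h]
  simp [modNewtonFun, hN, h]

lemma modNewton_neg (f : ℝ → ℝ) : modNewtonFun (fun x => -f x) = modNewtonFun f := by
  have hd : deriv (fun x => -f x) = fun x => -(deriv f x) := by
    funext x; exact deriv.neg
  have hN : newtonFun (fun x => -f x) = newtonFun f := by
    funext x; simp [newtonFun, hd, neg_div_neg_eq]
  funext x
  simp [modNewtonFun, hN, hd, neg_div_neg_eq]

lemma contOn_modNewton {f : ℝ → ℝ} (hf : Continuous f) (hf' : Continuous (deriv f))
    {S : Set ℝ} (h : ∀ x ∈ S, deriv f x ≠ 0) :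
    ContinuousOn (modNewtonFun f) S := by
  have hN : ContinuousOn (newtonFun f) S :=
    continuousOn_id.sub ((hf.continuousOn).div (hf'.continuousOn) h)
  exact (hN.sub (((hf.comp_continuousOn hN)).div (hf'.continuousOn) h))

lemma eventually_ne_of_root {f : ℝ → ℝ} {a : ℝ} (hd : DifferentiableAt ℝ f a)
    (h0 : f a = 0) (h1 : deriv f a ≠ 0) : ∀ᶠ y in 𝓝[≠] a, f y ≠ 0 := by
  have hs := hasDerivAt_iff_tendsto_slope.1 hd.hasDerivAt
  have := hs.eventually_ne h1
  filter_upwards [this, self_mem_nhdsWithin] with y hy hy'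
  intro hfy
  apply hy
  simp [slope, hfy, h0]

variable {f : ℝ → ℝ}

-- gap construction
lemma gap_next (hcont : Continuous f) (hdiff : Differentiable ℝ f)
    (hz : ∀ x, f x = 0 → deriv f x ≠ 0) {b0 w : ℝ}
    (hb0 : f b0 = 0) (hw : f w = 0) (hlt : b0 < w) :
    ∃ b, b0 < b ∧ b ≤ w ∧ f b = 0 ∧ ∀ x ∈ Ioo b0 b, f x ≠ 0 := by
  -- isolated root gives t
  have hev : ∀ᶠ y in 𝓝[≠] b0, f y ≠ 0 := by
    have hs := hasDerivAt_iff_tendsto_slope.1 (hdiff b0).hasDerivAt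
    have := hs.eventually_ne (hz b0 hb0)
    filter_upwards [this, self_mem_nhdsWithin] with y hy hy'
    intro hfy
    apply hy
    simp [slope, hfy, hb0]
  have h2 : ∀ᶠ y in 𝓝[>] b0, f y ≠ 0 :=
    nhdsWithin_mono b0 (fun x hx => ne_of_gt hx) hev
  have h3 : ∀ᶠ y in 𝓝[>] b0, y < w := by
    filter_upwards [Ioo_mem_nhdsGT_of_mem (⟨le_refl _, hlt⟩ : b0 ∈ Ico b0 w)] with y hy
      using hy.2
  rcases (mem_nhdsGT_iff_exists_Ioc_subset).1 (h2.and h3) with ⟨t, ht, hsub⟩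
  have htmem : t ∈ Ioc b0 t := ⟨ht, le_refl t⟩
  have hft : f t ≠ 0 := (hsub htmem).1
  have htw : t < w := (hsub htmem).2
  set S : Set ℝ := Icc t w ∩ f ⁻¹' {0} with hS
  have hScl : IsClosed S := isClosed_Icc.inter (isClosed_singleton.preimage hcont)
  have hSne : S.Nonempty := ⟨w, ⟨le_of_lt htw, le_refl _⟩, hw⟩
  have hSbdd : BddBelow S := ⟨t, fun x hx => hx.1.1⟩
  set b := sInf S with hb
  have hbS : b ∈ S := hScl.csInf_mem hSne hSbdd
  have hfb : f b = 0 := hbS.2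
  have htb : t < b := lt_of_le_of_ne hbS.1.1 (by intro h; rw [← h] at hfb; exact hft hfb)
  refine ⟨b, lt_trans ht htb, hbS.1.2, hfb, ?_⟩
  intro x hx hfx
  rcases le_or_gt x t with h | h
  · exact (hsub ⟨hx.1, h⟩).1 hfx
  · have : x ∈ S := ⟨⟨le_of_lt h, le_trans (le_of_lt hx.2) hbS.1.2⟩, hfx⟩
    exact absurd (csInf_le hSbdd this) (not_le.2 hx.2)

-- sign dichotomy on a gap
lemma gap_sign (hcont : Continuous f) {a b : ℝ} (hab : a < b)
    (h : ∀ x ∈ Ioo a b, f x ≠ 0) :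
    (∀ x ∈ Ioo a b, 0 < f x) ∨ (∀ x ∈ Ioo a b, f x < 0) := by
  obtain ⟨t, ht⟩ : (Ioo a b).Nonempty := nonempty_Ioo.2 hab
  rcases lt_or_gt_of_ne (h t ht) with hneg | hpos
  · right
    intro x hx
    by_contra hge
    push_neg at hge
    have hposx : 0 < f x := lt_of_le_of_ne hge (fun e => h x hx e.symm)
    rcases le_total t x with htx | hxt
    · rcases intermediate_value_Icc htx hcont.continuousOn
        (⟨le_of_lt hneg, le_of_lt hposx⟩ : (0:ℝ) ∈ Icc (f t) (f x)) with ⟨y, hy, hy0⟩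
      exact h y ⟨lt_of_lt_of_le ht.1 hy.1, lt_of_le_of_lt hy.2 hx.2⟩ hy0
    · rcases intermediate_value_Icc' hxt hcont.continuousOn
        (⟨le_of_lt hneg, le_of_lt hposx⟩ : (0:ℝ) ∈ Icc (f t) (f x)) with ⟨y, hy, hy0⟩
      exact h y ⟨lt_of_lt_of_le hx.1 hy.1, lt_of_le_of_lt hy.2 ht.2⟩ hy0
  · left
    intro x hx
    by_contra hge
    push_neg at hge
    have hnegx : f x < 0 := lt_of_le_of_ne hge (h x hx)
    rcases le_total t x with htx | hxt
    · rcases intermediate_value_Icc' htx hcont.continuousOn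
        (⟨le_of_lt hnegx, le_of_lt hpos⟩ : (0:ℝ) ∈ Icc (f x) (f t)) with ⟨y, hy, hy0⟩
      exact h y ⟨lt_of_lt_of_le ht.1 hy.1, lt_of_le_of_lt hy.2 hx.2⟩ hy0
    · rcases intermediate_value_Icc hxt hcont.continuousOn
        (⟨le_of_lt hnegx, le_of_lt hpos⟩ : (0:ℝ) ∈ Icc (f x) (f t)) with ⟨y, hy, hy0⟩
      exact h y ⟨lt_of_lt_of_le hx.1 hy.1, lt_of_le_of_lt hy.2 ht.2⟩ hy0

-- derivative signs at the endpoints of a positive gap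
lemma deriv_pos_left (hdiff : Differentiable ℝ f) {a b : ℝ}
    (h0 : f a = 0) (h1 : deriv f a ≠ 0) (hab : a < b)
    (hpos : ∀ x ∈ Ioo a b, 0 < f x) : 0 < deriv f a := by
  have hs := hasDerivAt_iff_tendsto_slope.1 (hdiff a).hasDerivAt
  have hs' : Tendsto (slope f a) (𝓝[>] a) (𝓝 (deriv f a)) :=
    hs.mono_left (nhdsWithin_mono a (fun x hx => ne_of_gt hx))
  have hev : ∀ᶠ y in 𝓝[>] a, 0 ≤ slope f a y := by
    filter_upwards [Ioo_mem_nhdsGT_of_mem (⟨le_refl _, hab⟩ : a ∈ Ico a b)] with y hy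
    have : 0 < f y := hpos y hy
    have hya : 0 < y - a := sub_pos.2 hy.1
    simp only [slope, h0, sub_zero, vsub_eq_sub]
    positivity
  exact lt_of_le_of_ne (ge_of_tendsto hs' hev) (Ne.symm h1)

lemma deriv_neg_right (hdiff : Differentiable ℝ f) {a b : ℝ}
    (h0 : f b = 0) (h1 : deriv f b ≠ 0) (hab : a < b)
    (hpos : ∀ x ∈ Ioo a b, 0 < f x) : deriv f b < 0 := by
  have hs := hasDerivAt_iff_tendsto_slope.1 (hdiff b).hasDerivAt
  have hs' : Tendsto (slope f b) (𝓝[<] b) (𝓝 (deriv f b)) :=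
    hs.mono_left (nhdsWithin_mono b (fun x hx => ne_of_lt hx))
  have hev : ∀ᶠ y in 𝓝[<] b, slope f b y ≤ 0 := by
    filter_upwards [Ioo_mem_nhdsLT_of_mem (⟨hab, le_refl _⟩ : b ∈ Ioc a b)] with y hy
    have hfy : 0 < f y := hpos y hy
    have hyb : y - b < 0 := sub_neg.2 hy.2
    simp only [slope, h0, vsub_eq_sub, sub_zero, smul_eq_mul]
    have hinv : (y - b)⁻¹ < 0 := inv_lt_zero.2 hyb
    exact le_of_lt (mul_neg_of_neg_of_pos hinv hfy)
  exact lt_of_le_of_ne (le_of_tendsto hs' hev) h1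

-- sign flips across a simple root
lemma sign_flip_pos (hcont : Continuous f) (hdiff : Differentiable ℝ f)
    {a b b' : ℝ} (hab : a < b) (hbb' : b < b')
    (h0 : f b = 0) (h1 : deriv f b ≠ 0)
    (hpos : ∀ x ∈ Ioo a b, 0 < f x)
    (hne : ∀ x ∈ Ioo b b', f x ≠ 0) :
    ∀ x ∈ Ioo b b', f x < 0 := by
  have hd : deriv f b < 0 := deriv_neg_right hdiff h0 h1 hab hpos
  have hs := hasDerivAt_iff_tendsto_slope.1 (hdiff b).hasDerivAt
  have hs' : Tendsto (slope f b) (𝓝[>] b) (𝓝 (deriv f b)) :=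
    hs.mono_left (nhdsWithin_mono b (fun x hx => ne_of_gt hx))
  have hev : ∀ᶠ y in 𝓝[>] b, slope f b y < 0 := hs'.eventually (eventually_lt_nhds hd)
  have hmem : Ioo b b' ∈ 𝓝[>] b := Ioo_mem_nhdsGT_of_mem ⟨le_refl _, hbb'⟩
  obtain ⟨y, hy1, hy2⟩ := (hev.and (eventually_of_mem hmem (fun x hx => hx))).exists
  have hyneg : f y < 0 := by
    by_contra hge
    push_neg at hge
    have : 0 ≤ slope f b y := by
      simp only [slope, h0, vsub_eq_sub, sub_zero, smul_eq_mul]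
      have : 0 < (y - b)⁻¹ := inv_pos.2 (sub_pos.2 hy2.1)
      positivity
    linarith
  rcases gap_sign hcont hbb' hne with h | h
  · exact absurd (h y hy2) (not_lt.2 (le_of_lt hyneg))
  · exact h

-- first critical point
lemma first_crit {f : ℝ → ℝ} {a b : ℝ} (hf' : Continuous (deriv f)) (ha : 0 < deriv f a) (hb : deriv f b < 0)
    (hab : a < b) :
    ∃ c, a < c ∧ c < b ∧ deriv f c = 0 ∧ ∀ x ∈ Ico a c, 0 < deriv f x := by
  set S : Set ℝ := Icc a b ∩ (deriv f)⁻¹' {0} with hS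
  have hSc : IsClosed S := isClosed_Icc.inter (isClosed_singleton.preimage hf')
  have hSne : S.Nonempty := by
    have := intermediate_value_Icc' (le_of_lt hab) (hf'.continuousOn)
      (⟨le_of_lt hb, le_of_lt ha⟩ : (0:ℝ) ∈ Icc (deriv f b) (deriv f a))
    rcases this with ⟨c, hc, hc0⟩
    exact ⟨c, hc, hc0⟩
  have hSbdd : BddBelow S := ⟨a, fun x hx => hx.1.1⟩
  set c := sInf S with hc
  have hcS : c ∈ S := hSc.csInf_mem hSne hSbdd
  have hc0 : deriv f c = 0 := hcS.2
  have hca : a ≤ c := hcS.1.1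
  have hca' : a < c := lt_of_le_of_ne hca (by intro heq; rw [← heq] at hc0; exact absurd hc0 (ne_of_gt ha))
  have hcb : c < b := lt_of_le_of_ne hcS.1.2 (by intro heq; rw [heq] at hc0; exact absurd hc0 (ne_of_lt hb))
  refine ⟨c, hca', hcb, hc0, ?_⟩
  intro x hx
  have hxne : deriv f x ≠ 0 := by
    intro h0
    have hxS : x ∈ S := ⟨⟨hx.1, le_of_lt (lt_of_lt_of_le hx.2 (le_of_lt hcb))⟩, h0⟩
    exact absurd (csInf_le hSbdd hxS) (not_le.2 hx.2)
  by_contra hle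
  push_neg at hle
  have hxneg : deriv f x < 0 := lt_of_le_of_ne hle hxne
  have := intermediate_value_Icc' hx.1 (hf'.continuousOn)
    (⟨le_of_lt hxneg, le_of_lt ha⟩ : (0:ℝ) ∈ Icc (deriv f x) (deriv f a))
  rcases this with ⟨y, hy, hy0⟩
  have hyS : y ∈ S := ⟨⟨hy.1, le_of_lt (lt_of_le_of_lt hy.2 (lt_of_lt_of_le hx.2 (le_of_lt hcb)))⟩, hy0⟩
  have : c ≤ y := csInf_le hSbdd hyS
  exact absurd (lt_of_le_of_lt hy.2 hx.2) (not_lt.2 this)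


lemma escape_up (hf : Continuous f) (hf' : Continuous (deriv f))
    (hac : a < c) (hc0 : deriv f c = 0) (hfc : 0 < f c)
    (hder : ∀ x ∈ Ioo a c, 0 < deriv f x)
    (hbot : Tendsto f atBot atBot) (Bd : ℝ) :
    ∃ d, a < d ∧ d < c ∧ Bd ≤ modNewtonFun f d := by
  set E : ℝ := |Bd - a| + 1 with hE
  set K : ℝ := -(2 * f c + E) with hK
  obtain ⟨T, hT⟩ : ∃ T, ∀ y ≤ T, f y ≤ K := by
    have := hbot.eventually (eventually_le_atBot K)
    exact eventually_atBot.1 this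
  set T' : ℝ := min T c with hT'
  have hT'c : T' ≤ c := min_le_right _ _
  have hT'T : T' ≤ T := min_le_left _ _
  have hpos1 : (0:ℝ) < c - T' + 1 := by linarith
  set ε : ℝ := min 1 ((f c / 2) / (c - T' + 1)) with hε
  have hεpos : 0 < ε := lt_min one_pos (div_pos (by linarith) hpos1)
  have hε1 : ε ≤ 1 := min_le_left _ _
  have hε2 : ε ≤ (f c / 2) / (c - T' + 1) := min_le_right _ _
  -- find the point x
  set U : Set ℝ := f ⁻¹' (Ioi (f c / 2)) ∩ f ⁻¹' (Iio (2 * f c)) ∩ (deriv f) ⁻¹' (Iio ε)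
    with hU
  have hUopen : IsOpen U :=
    (((isOpen_Ioi.preimage hf).inter (isOpen_Iio.preimage hf)).inter
      (isOpen_Iio.preimage hf'))
  have hcU : c ∈ U := by
    refine ⟨⟨?_, ?_⟩, ?_⟩ <;> simp [hc0] <;> linarith
  have hUnhds : U ∈ 𝓝[<] c := nhdsWithin_le_nhds (hUopen.mem_nhds hcU)
  have hIoo : Ioo a c ∈ 𝓝[<] c := Ioo_mem_nhdsLT_of_mem ⟨hac, le_refl _⟩
  obtain ⟨x, hxU, hxI⟩ : ∃ x, x ∈ U ∧ x ∈ Ioo a c := by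
    have : U ∩ Ioo a c ∈ 𝓝[<] c := inter_mem hUnhds hIoo
    rcases Filter.nonempty_of_mem this with ⟨x, hx1, hx2⟩
    exact ⟨x, hx1, hx2⟩
  obtain ⟨⟨hx1, hx2⟩, hx3⟩ := hxU
  simp only [mem_preimage, mem_Ioi, mem_Iio] at hx1 hx2 hx3
  have hdx : 0 < deriv f x := hder x hxI
  have hdx1 : deriv f x ≤ 1 := le_of_lt (lt_of_lt_of_le hx3 hε1)
  set dx : ℝ := deriv f x with hdx'
  set N : ℝ := x - f x / dx with hN
  -- f x / dx is large
  have hratio : c - T' + 1 ≤ f x / dx := by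
    have h1 : (f c / 2) / ε ≤ f x / dx := by
      apply div_le_div₀ (le_of_lt (lt_trans (by linarith : (0:ℝ) < f c / 2) hx1))
        (le_of_lt hx1) hdx (le_of_lt hx3)
    have h2 : c - T' + 1 ≤ (f c / 2) / ε := by
      rw [le_div_iff₀ hεpos]
      calc (c - T' + 1) * ε ≤ (c - T' + 1) * ((f c / 2) / (c - T' + 1)) := by
            exact mul_le_mul_of_nonneg_left hε2 (le_of_lt hpos1)
        _ = f c / 2 := by field_simp
    linarith
  have hNT : N ≤ T := by
    have : N ≤ x - (c - T' + 1) := by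
      rw [hN]; linarith
    have hxc : x < c := hxI.2
    linarith
  have hfN : f N ≤ K := hT N hNT
  -- assemble
  have hM : modNewtonFun f x = N - f N / dx := rfl
  have hfNd : f N / dx ≤ K / dx := by gcongr
  have hKd : K / dx = -((2 * f c) / dx) - E / dx := by
    rw [hK, neg_div, add_div]; ring
  have hfxd : f x / dx ≤ (2 * f c) / dx := by gcongr
  have hEd : E ≤ E / dx := by
    rw [le_div_iff₀ hdx]
    have hE0 : 0 ≤ E := by rw [hE]; positivity
    nlinarith
  have habs : Bd - a ≤ |Bd - a| := le_abs_self _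
  have hax : a < x := hxI.1
  refine ⟨x, hxI.1, hxI.2, ?_⟩
  rw [hM]
  have hNlow : x - (2 * f c) / dx ≤ N := by rw [hN]; linarith
  linarith

lemma escape_down (hf : Continuous f) (hf' : Continuous (deriv f))
    (hac : a < c) (hc0 : deriv f c = 0) (hfc : f c < 0)
    (hder : ∀ x ∈ Ioo a c, deriv f x < 0)
    (hbot : Tendsto f atBot atBot) (Bd : ℝ) :
    ∃ d, a < d ∧ d < c ∧ modNewtonFun f d ≤ Bd := by
  set K : ℝ := -(|c| + |Bd| + 1) with hK
  obtain ⟨T, hT⟩ : ∃ T, ∀ y ≤ T, f y ≤ K :=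
    eventually_atBot.1 (hbot.eventually (eventually_le_atBot K))
  set T' : ℝ := min T c with hT'
  have hT'c : T' ≤ c := min_le_right _ _
  have hT'T : T' ≤ T := min_le_left _ _
  have hpos1 : (0:ℝ) < c - T' + 1 := by linarith
  set ε : ℝ := min 1 ((-f c / 2) / (c - T' + 1)) with hε
  have hεpos : 0 < ε := lt_min one_pos (div_pos (by linarith) hpos1)
  have hε1 : ε ≤ 1 := min_le_left _ _
  have hε2 : ε ≤ (-f c / 2) / (c - T' + 1) := min_le_right _ _
  set U : Set ℝ := f ⁻¹' (Iio (f c / 2)) ∩ f ⁻¹' (Ioi (2 * f c)) ∩ (deriv f) ⁻¹' (Ioi (-ε))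
    with hU
  have hUopen : IsOpen U :=
    (((isOpen_Iio.preimage hf).inter (isOpen_Ioi.preimage hf)).inter
      (isOpen_Ioi.preimage hf'))
  have hcU : c ∈ U := by
    refine ⟨⟨?_, ?_⟩, ?_⟩ <;> simp [hc0] <;> linarith
  have hUnhds : U ∈ 𝓝[<] c := nhdsWithin_le_nhds (hUopen.mem_nhds hcU)
  have hIoo : Ioo a c ∈ 𝓝[<] c := Ioo_mem_nhdsLT_of_mem ⟨hac, le_refl _⟩
  obtain ⟨x, hxU, hxI⟩ : ∃ x, x ∈ U ∧ x ∈ Ioo a c := by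
    have : U ∩ Ioo a c ∈ 𝓝[<] c := inter_mem hUnhds hIoo
    rcases Filter.nonempty_of_mem this with ⟨x, hx1, hx2⟩
    exact ⟨x, hx1, hx2⟩
  obtain ⟨⟨hx1, hx2⟩, hx3⟩ := hxU
  simp only [mem_preimage, mem_Ioi, mem_Iio] at hx1 hx2 hx3
  have hdx : deriv f x < 0 := hder x hxI
  set dx : ℝ := deriv f x with hdx'
  have hdxn : 0 < -dx := by linarith
  have hdxε : -dx < ε := by linarith
  have hdx1 : -dx ≤ 1 := le_of_lt (lt_of_lt_of_le hdxε hε1)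
  set N : ℝ := x - f x / dx with hN
  have hratio : c - T' + 1 ≤ f x / dx := by
    have h1 : (-f c / 2) / ε ≤ (-f x) / (-dx) := by
      apply div_le_div₀ (by linarith) (by linarith) hdxn (le_of_lt hdxε)
    have h2 : c - T' + 1 ≤ (-f c / 2) / ε := by
      rw [le_div_iff₀ hεpos]
      calc (c - T' + 1) * ε ≤ (c - T' + 1) * ((-f c / 2) / (c - T' + 1)) := by
            exact mul_le_mul_of_nonneg_left hε2 (le_of_lt hpos1)
        _ = -f c / 2 := by field_simp
    have h3 : (-f x) / (-dx) = f x / dx := neg_div_neg_eq _ _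
    linarith
  have hNT : N ≤ T := by
    have : N ≤ x - (c - T' + 1) := by rw [hN]; linarith
    have hxc : x < c := hxI.2
    linarith
  have hfN : f N ≤ K := hT N hNT
  have hM : modNewtonFun f x = N - f N / dx := rfl
  have hfNd : K / dx ≤ f N / dx := by
    have h4 : 0 ≤ (f N - K) / dx :=
      div_nonneg_of_nonpos (by linarith) (le_of_lt hdx)
    have h5 : (f N - K) / dx = f N / dx - K / dx := sub_div _ _ _
    linarith
  have hKdx : -K ≤ K / dx := by
    have h6 : K / dx = (-K) / (-dx) := (neg_div_neg_eq _ _).symm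
    rw [h6, le_div_iff₀ hdxn]
    have hKneg : 0 ≤ -K := by
      rw [hK, neg_neg]
      have := abs_nonneg c
      have := abs_nonneg Bd
      linarith
    nlinarith
  have hNc : N ≤ x - (c - T' + 1) := by rw [hN]; linarith
  have hxc : x < c := hxI.2
  have habs1 : c ≤ |c| := le_abs_self _
  have habs2 : -Bd ≤ |Bd| := neg_le_abs _
  refine ⟨x, hxI.1, hxI.2, ?_⟩
  rw [hM]
  linarith

-- one-orientation helper
lemma pullback_incr {g : ℝ → ℝ} {u v w z α β : ℝ}
    (hg : ContinuousOn g (Icc u v))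
    (hα : α ∈ Icc u v) (hβ : β ∈ Icc u v) (hαβ : α ≤ β) (hwz : w ≤ z)
    (hgα : g α = w) (hgβ : g β = z) :
    ∃ u' v', u ≤ u' ∧ u' ≤ v' ∧ v' ≤ v ∧ g '' Icc u' v' ⊆ Icc w z ∧
      g u' = w ∧ g v' = z := by
  have hsub : Icc α β ⊆ Icc u v := Icc_subset_Icc hα.1 hβ.2
  set S : Set ℝ := Icc α β ∩ g ⁻¹' {w} with hS
  have hScl : IsClosed S :=
    (hg.mono hsub).preimage_isClosed_of_isClosed isClosed_Icc isClosed_singleton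
  have hSne : S.Nonempty := ⟨α, left_mem_Icc.2 hαβ, hgα⟩
  have hSbdd : BddAbove S := ⟨β, fun x hx => hx.1.2⟩
  set u' := sSup S with hu'
  have hu'S : u' ∈ S := hScl.csSup_mem hSne hSbdd
  have hgu' : g u' = w := hu'S.2
  have hu'αβ : u' ∈ Icc α β := hu'S.1
  set S₂ : Set ℝ := Icc u' β ∩ g ⁻¹' {z} with hS₂
  have hsub₂ : Icc u' β ⊆ Icc u v := Icc_subset_Icc (hsub hu'αβ).1 hβ.2
  have hS₂cl : IsClosed S₂ :=
    (hg.mono hsub₂).preimage_isClosed_of_isClosed isClosed_Icc isClosed_singleton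
  have hS₂ne : S₂.Nonempty := ⟨β, ⟨hu'αβ.2, le_refl _⟩, hgβ⟩
  have hS₂bdd : BddBelow S₂ := ⟨u', fun x hx => hx.1.1⟩
  set v' := sInf S₂ with hv'
  have hv'S : v' ∈ S₂ := hS₂cl.csInf_mem hS₂ne hS₂bdd
  have hgv' : g v' = z := hv'S.2
  have hv'I : v' ∈ Icc u' β := hv'S.1
  have huv' : u' ≤ v' := hv'I.1
  have hle1 : u ≤ u' := (hsub hu'αβ).1
  have hle2 : v' ≤ v := le_trans hv'I.2 hβ.2
  have hsub' : Icc u' v' ⊆ Icc u v := Icc_subset_Icc hle1 hle2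
  refine ⟨u', v', hle1, huv', hle2, ?_, hgu', hgv'⟩
  rintro y ⟨x, hx, rfl⟩
  constructor
  · by_contra hlt
    push_neg at hlt
    have hxu' : u' < x := by
      rcases lt_or_eq_of_le hx.1 with h | h
      · exact h
      · exfalso; rw [← h, hgu'] at hlt; exact absurd hlt (lt_irrefl _)
    have hxv : Icc x v' ⊆ Icc u v := Icc_subset_Icc (le_trans hle1 hx.1) hle2
    have hIVT := intermediate_value_Icc hx.2 (hg.mono hxv)
      (⟨le_of_lt hlt, by rw [hgv']; exact hwz⟩ : w ∈ Icc (g x) (g v'))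
    rcases hIVT with ⟨y, hy, hgy⟩
    have hyS : y ∈ S := ⟨⟨le_trans hu'αβ.1 (le_trans (le_of_lt hxu') hy.1),
      le_trans hy.2 hv'I.2⟩, hgy⟩
    have : y ≤ u' := le_csSup hSbdd hyS
    have : u' < y := lt_of_lt_of_le hxu' hy.1
    linarith
  · by_contra hlt
    push_neg at hlt
    have hxv' : x < v' := by
      rcases lt_or_eq_of_le hx.2 with h | h
      · exact h
      · exfalso; rw [h, hgv'] at hlt; exact absurd hlt (lt_irrefl _)
    have hux : Icc u' x ⊆ Icc u v := Icc_subset_Icc hle1 (le_trans hx.2 hle2)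
    have hIVT := intermediate_value_Icc hx.1 (hg.mono hux)
      (⟨by rw [hgu']; exact hwz, le_of_lt hlt⟩ : z ∈ Icc (g u') (g x))
    rcases hIVT with ⟨y, hy, hgy⟩
    have hyS₂ : y ∈ S₂ := ⟨⟨hy.1, le_trans hy.2 (le_trans (le_of_lt hxv') hv'I.2)⟩, hgy⟩
    have : v' ≤ y := csInf_le hS₂bdd hyS₂
    have : y < v' := lt_of_le_of_lt hy.2 hxv'
    linarith

lemma pullback {g : ℝ → ℝ} {u v w z : ℝ}
    (hg : ContinuousOn g (Icc u v)) (hwz : w ≤ z)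
    (hcov : Icc w z ⊆ g '' Icc u v) :
    ∃ u' v', u ≤ u' ∧ u' ≤ v' ∧ v' ≤ v ∧ g '' Icc u' v' ⊆ Icc w z ∧
      ((g u' = w ∧ g v' = z) ∨ (g u' = z ∧ g v' = w)) := by
  obtain ⟨α, hα, hgα⟩ := hcov (left_mem_Icc.2 hwz)
  obtain ⟨β, hβ, hgβ⟩ := hcov (right_mem_Icc.2 hwz)
  rcases le_total α β with hαβ | hβα
  · obtain ⟨u', v', h1, h2, h3, h4, h5, h6⟩ :=
      pullback_incr hg hα hβ hαβ hwz hgα hgβ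
    exact ⟨u', v', h1, h2, h3, h4, Or.inl ⟨h5, h6⟩⟩
  · -- use the negation trick
    have hg' : ContinuousOn (fun x => -g x) (Icc u v) := hg.neg
    have hwz' : -z ≤ -w := neg_le_neg hwz
    obtain ⟨u', v', h1, h2, h3, h4, h5, h6⟩ :=
      pullback_incr hg' hβ hα hβα hwz' (by simp [hgβ]) (by simp [hgα])
    refine ⟨u', v', h1, h2, h3, ?_, Or.inr ?_⟩
    · rintro y ⟨x, hx, rfl⟩
      have := h4 ⟨x, hx, rfl⟩
      simp only [mem_Icc] at this ⊢
      constructor <;> linarith [this.1, this.2]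
    · constructor
      · have : -g u' = -z := h5
        linarith
      · have : -g v' = -w := h6
        linarith

lemma chain {g : ℝ → ℝ} {p q : ℝ}
    (hg : ContinuousOn g (Icc p q)) (hpq : p ≤ q)
    (hcov : Icc p q ⊆ g '' Icc p q) :
    ∀ (k : ℕ) (w z : ℝ), p ≤ w → w ≤ z → z ≤ q →
      ∃ u v, p ≤ u ∧ u ≤ v ∧ v ≤ q ∧
        (∀ j, j ≤ k → ContinuousOn (g^[j]) (Icc u v)) ∧
        (∀ j, j ≤ k → g^[j] '' Icc u v ⊆ Icc p q) ∧
        g^[k] '' Icc u v ⊆ Icc w z ∧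
        ((g^[k] u = w ∧ g^[k] v = z) ∨ (g^[k] u = z ∧ g^[k] v = w)) := by
  intro k
  induction k with
  | zero =>
    intro w z hpw hwz hzq
    refine ⟨w, z, hpw, hwz, hzq, ?_, ?_, ?_, Or.inl ⟨rfl, rfl⟩⟩
    · intro j hj
      simp only [Nat.le_zero] at hj
      subst hj
      simpa using continuousOn_id
    · intro j hj
      simp only [Nat.le_zero] at hj
      subst hj
      simpa using Icc_subset_Icc hpw hzq
    · simpa using subset_refl _
  | succ k ih =>
    intro w z hpw hwz hzq
    obtain ⟨u, v, hpu, huv, hvq, hcont, himg, hlast, hend⟩ := ih w z hpw hwz hzq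
    -- pull back [u,v] through g on [p,q]
    obtain ⟨u', v', hpu', hu'v', hv'q, himg', hend'⟩ :=
      pullback hg huv (subset_trans (Icc_subset_Icc hpu hvq) hcov)
    have hmaps : MapsTo g (Icc u' v') (Icc u v) := fun x hx => himg' ⟨x, hx, rfl⟩
    have hgsub : ContinuousOn g (Icc u' v') := hg.mono (Icc_subset_Icc hpu' hv'q)
    refine ⟨u', v', hpu', hu'v', hv'q, ?_, ?_, ?_, ?_⟩
    · intro j hj
      cases j with
      | zero => simpa using continuousOn_id
      | succ i =>
        have hi : i ≤ k := Nat.succ_le_succ_iff.1 hj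
        rw [Function.iterate_succ]
        exact (hcont i hi).comp hgsub hmaps
    · intro j hj
      cases j with
      | zero => simpa using Icc_subset_Icc hpu' hv'q
      | succ i =>
        have hi : i ≤ k := Nat.succ_le_succ_iff.1 hj
        rw [Function.iterate_succ, Set.image_comp]
        exact subset_trans (Set.image_mono  himg') (himg i hi)
    · rw [Function.iterate_succ, Set.image_comp]
      exact subset_trans (Set.image_mono  himg') hlast
    · have e1 : g^[k+1] u' = g^[k] (g u') := Function.iterate_succ_apply g k u'
      have e2 : g^[k+1] v' = g^[k] (g v') := Function.iterate_succ_apply g k v'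
      rcases hend' with ⟨a1, a2⟩ | ⟨a1, a2⟩ <;> rcases hend with ⟨b1, b2⟩ | ⟨b1, b2⟩
      · exact Or.inl ⟨by rw [e1, a1, b1], by rw [e2, a2, b2]⟩
      · exact Or.inr ⟨by rw [e1, a1, b1], by rw [e2, a2, b2]⟩
      · exact Or.inr ⟨by rw [e1, a1, b2], by rw [e2, a2, b1]⟩
      · exact Or.inl ⟨by rw [e1, a1, b2], by rw [e2, a2, b1]⟩

lemma horseshoe {g : ℝ → ℝ} {p q r s : ℝ}
    (hpq : p ≤ q) (hqr : q < r) (hrs : r ≤ s)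
    (hg1 : ContinuousOn g (Icc p q)) (hg2 : ContinuousOn g (Icc r s))
    (hc1 : Icc p s ⊆ g '' Icc p q) (hc2 : Icc p q ⊆ g '' Icc r s) :
    ∀ n, 2 ≤ n → ∃ a, a ∈ Icc r s ∧ g^[n] a = a ∧
      ∀ m, 1 ≤ m → m < n → g^[m] a ∈ Icc p q := by
  intro n hn
  obtain ⟨k, rfl⟩ : ∃ k, n = k + 2 := ⟨n - 2, by omega⟩
  have hps : p ≤ s := le_trans hpq (le_trans (le_of_lt hqr) hrs)
  -- PB₀ : pull [r,s] back through g on [p,q]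
  obtain ⟨u₀, v₀, hpu₀, hu₀v₀, hv₀q, himg₀, hend₀⟩ :=
    pullback hg1 hrs (subset_trans (Icc_subset_Icc (le_trans hpq (le_of_lt hqr)) (le_refl s)) hc1)
  -- chain of length k inside [p,q] targeting [u₀,v₀]
  have hcov' : Icc p q ⊆ g '' Icc p q :=
    subset_trans (Icc_subset_Icc (le_refl p) (le_trans (le_of_lt hqr) hrs)) hc1
  obtain ⟨u₁, v₁, hpu₁, hu₁v₁, hv₁q, hcont₁, himg₁, hlast₁, hend₁⟩ :=
    chain hg1 hpq hcov' k u₀ v₀ hpu₀ hu₀v₀ hv₀q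
  -- PB₂ : pull [u₁,v₁] back through g on [r,s]
  obtain ⟨u₂, v₂, hru₂, hu₂v₂, hv₂s, himg₂, hend₂⟩ :=
    pullback hg2 hu₁v₁ (subset_trans (Icc_subset_Icc hpu₁ hv₁q) hc2)
  -- maps
  have hmaps2 : MapsTo g (Icc u₂ v₂) (Icc u₁ v₁) := fun x hx => himg₂ ⟨x, hx, rfl⟩
  have hmaps1 : MapsTo (g^[k]) (Icc u₁ v₁) (Icc u₀ v₀) := fun x hx => hlast₁ ⟨x, hx, rfl⟩
  have hg2sub : ContinuousOn g (Icc u₂ v₂) := hg2.mono (Icc_subset_Icc hru₂ hv₂s)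
  have hg1sub : ContinuousOn g (Icc u₀ v₀) := hg1.mono (Icc_subset_Icc hpu₀ hv₀q)
  set F : ℝ → ℝ := fun x => g (g^[k] (g x)) with hF
  have hFcont : ContinuousOn F (Icc u₂ v₂) :=
    (hg1sub.comp ((hcont₁ k (le_refl k)).comp hg2sub hmaps2) (hmaps1.comp hmaps2))
  have hFeq : ∀ x, g^[k+2] x = F x := by
    intro x
    rw [Function.iterate_succ_apply, Function.iterate_succ_apply']
  -- endpoint pairing
  have hFu : F u₂ = g (g^[k] (g u₂)) := rfl
  have hFv : F v₂ = g (g^[k] (g v₂)) := rfl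
  have hpair : (F u₂ = r ∧ F v₂ = s) ∨ (F u₂ = s ∧ F v₂ = r) := by
    rcases hend₂ with ⟨a1, a2⟩ | ⟨a1, a2⟩ <;> rcases hend₁ with ⟨b1, b2⟩ | ⟨b1, b2⟩ <;>
      rcases hend₀ with ⟨c1, c2⟩ | ⟨c1, c2⟩
    · exact Or.inl ⟨by rw [hFu, a1, b1, c1], by rw [hFv, a2, b2, c2]⟩
    · exact Or.inr ⟨by rw [hFu, a1, b1, c1], by rw [hFv, a2, b2, c2]⟩
    · exact Or.inr ⟨by rw [hFu, a1, b1, c2], by rw [hFv, a2, b2, c1]⟩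
    · exact Or.inl ⟨by rw [hFu, a1, b1, c2], by rw [hFv, a2, b2, c1]⟩
    · exact Or.inr ⟨by rw [hFu, a1, b2, c2], by rw [hFv, a2, b1, c1]⟩
    · exact Or.inl ⟨by rw [hFu, a1, b2, c2], by rw [hFv, a2, b1, c1]⟩
    · exact Or.inl ⟨by rw [hFu, a1, b2, c1], by rw [hFv, a2, b1, c2]⟩
    · exact Or.inr ⟨by rw [hFu, a1, b2, c1], by rw [hFv, a2, b1, c2]⟩
  -- fixed point of F on [u₂,v₂]
  have hIcc : Icc u₂ v₂ ⊆ Icc r s := Icc_subset_Icc hru₂ hv₂s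
  have hHcont : ContinuousOn (fun x => F x - x) (Icc u₂ v₂) := hFcont.sub continuousOn_id
  obtain ⟨x, hx, hx0⟩ : ∃ x ∈ Icc u₂ v₂, F x - x = 0 := by
    rcases hpair with ⟨h1, h2⟩ | ⟨h1, h2⟩
    · have h0 : (0:ℝ) ∈ Icc (F u₂ - u₂) (F v₂ - v₂) := by
        constructor
        · rw [h1]; linarith [hru₂]
        · rw [h2]; linarith [hv₂s]
      obtain ⟨x, hx, hx0⟩ := intermediate_value_Icc hu₂v₂ hHcont h0
      exact ⟨x, hx, hx0⟩
    · have h0 : (0:ℝ) ∈ Icc (F v₂ - v₂) (F u₂ - u₂) := by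
        constructor
        · rw [h2]; linarith [hv₂s]
        · rw [h1]; linarith [hru₂]
      obtain ⟨x, hx, hx0⟩ := intermediate_value_Icc' hu₂v₂ hHcont h0
      exact ⟨x, hx, hx0⟩
  refine ⟨x, hIcc hx, by rw [hFeq x]; linarith [hx0], ?_⟩
  intro m hm1 hmn
  obtain ⟨j, rfl⟩ : ∃ j, m = j + 1 := ⟨m - 1, by omega⟩
  have hjk : j ≤ k := by omega
  have hgx : g x ∈ Icc u₁ v₁ := hmaps2 hx
  have := himg₁ j hjk ⟨g x, hgx, rfl⟩
  rwa [Function.iterate_succ_apply]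

lemma deriv_neg_fun (f : ℝ → ℝ) : deriv (fun x => -f x) = fun x => -(deriv f x) := by
  funext x; exact deriv.neg

lemma sign_flip_neg {f : ℝ → ℝ} (hcont : Continuous f) (hdiff : Differentiable ℝ f)
    {a b b' : ℝ} (hab : a < b) (hbb' : b < b')
    (h0 : f b = 0) (h1 : deriv f b ≠ 0)
    (hneg : ∀ x ∈ Ioo a b, f x < 0)
    (hne : ∀ x ∈ Ioo b b', f x ≠ 0) :
    ∀ x ∈ Ioo b b', 0 < f x := by
  have hd : deriv (fun x => -f x) b ≠ 0 := by
    rw [deriv_neg_fun f]; simpa using h1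
  have := sign_flip_pos (f := fun x => -f x) hcont.neg hdiff.neg hab hbb'
    (by simp [h0]) hd
    (fun x hx => by simpa using hneg x hx)
    (fun x hx => by simpa using hne x hx)
  intro x hx
  have := this x hx
  simpa using this

/-- Main assembly: a positive gap (A,B) immediately followed by a negative gap
(B,C), together with `f → -∞` at `-∞`, yields periodic points of all periods
`n ≥ 2` for the modified Newton map. -/
lemma assemble {f : ℝ → ℝ} (hcont : Continuous f) (hcont' : Continuous (deriv f))
    (hdiff : Differentiable ℝ f) (hz : ∀ x, f x = 0 → deriv f x ≠ 0)
    (hbot : Tendsto f atBot atBot)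
    {A B C : ℝ} (hAB : A < B) (hBC : B < C)
    (hA : f A = 0) (hB : f B = 0) (hC : f C = 0)
    (hpos : ∀ x ∈ Ioo A B, 0 < f x) (hneg : ∀ x ∈ Ioo B C, f x < 0)
    {n : ℕ} (hn : 2 ≤ n) :
    ∃ a, (modNewtonFun f)^[n] a = a ∧
      ∀ m, 1 ≤ m → m < n → (modNewtonFun f)^[m] a ≠ a := by
  set M := modNewtonFun f with hM
  have dA : 0 < deriv f A := deriv_pos_left hdiff hA (hz A hA) hAB hpos
  have dB : deriv f B < 0 := deriv_neg_right hdiff hB (hz B hB) hAB hpos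
  -- first critical point of the positive gap
  obtain ⟨c₁, hc₁A, hc₁B, hc₁0, hc₁pos⟩ := first_crit hcont' dA dB hAB
  -- first critical point of the negative gap, via -f
  have hgd := deriv_neg_fun f
  have hgc' : Continuous (deriv (fun x => -f x)) := by rw [hgd]; exact hcont'.neg
  have dgB : 0 < deriv (fun x => -f x) B := by rw [hgd]; simpa using dB
  have dgC : deriv (fun x => -f x) C < 0 := by
    rw [hgd]
    have hgC : (fun x => -f x) C = 0 := by simp [hC]
    have := deriv_neg_right (f := fun x => -f x) hdiff.neg hgC
      (by rw [hgd]; simp; exact fun h => (hz C hC) h) hBC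
      (fun x hx => by simpa using hneg x hx)
    rw [hgd] at this
    simpa using this
  obtain ⟨c₂, hc₂B, hc₂C, hc₂0, hc₂pos⟩ :=
    first_crit (f := fun x => -f x) hgc' dgB dgC hBC
  have hc₂0' : deriv f c₂ = 0 := by
    rw [hgd] at hc₂0; simpa using hc₂0
  have hc₂neg : ∀ x ∈ Ico B c₂, deriv f x < 0 := by
    intro x hx
    have := hc₂pos x hx
    rw [hgd] at this
    simpa using this
  have hfc₂ : f c₂ < 0 := hneg c₂ ⟨hc₂B, hc₂C⟩
  -- escape points
  obtain ⟨d₂, hBd₂, hd₂c₂, hMd₂⟩ := escape_down hcont hcont' hc₂B hc₂0' hfc₂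
    (fun x hx => hc₂neg x ⟨le_of_lt hx.1, hx.2⟩) hbot A
  have hfc₁ : 0 < f c₁ := hpos c₁ ⟨hc₁A, hc₁B⟩
  obtain ⟨d₁, hAd₁, hd₁c₁, hMd₁⟩ := escape_up hcont hcont' hc₁A hc₁0 hfc₁
    (fun x hx => hc₁pos x ⟨le_of_lt hx.1, hx.2⟩) hbot d₂
  -- continuity of M on the two intervals
  have hg1 : ContinuousOn M (Icc A d₁) := by
    apply contOn_modNewton hcont hcont'
    intro x hx
    exact ne_of_gt (hc₁pos x ⟨hx.1, lt_of_le_of_lt hx.2 hd₁c₁⟩)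
  have hg2 : ContinuousOn M (Icc B d₂) := by
    apply contOn_modNewton hcont hcont'
    intro x hx
    exact ne_of_lt (hc₂neg x ⟨hx.1, lt_of_le_of_lt hx.2 hd₂c₂⟩)
  have hMA : M A = A := modNewton_fixed f A hA
  have hMB : M B = B := modNewton_fixed f B hB
  have hd₁B : d₁ < B := lt_trans hd₁c₁ hc₁B
  have hBd₂' : B ≤ d₂ := le_of_lt hBd₂
  -- covering relations
  have hc1cov : Icc A d₂ ⊆ M '' Icc A d₁ := by
    have hIVT := intermediate_value_Icc (le_of_lt hAd₁) hg1
    intro y hy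
    apply hIVT
    rw [hMA]
    exact ⟨hy.1, le_trans hy.2 hMd₁⟩
  have hc2cov : Icc A d₁ ⊆ M '' Icc B d₂ := by
    have hIVT := intermediate_value_Icc' hBd₂' hg2
    intro y hy
    apply hIVT
    rw [hMB]
    exact ⟨le_trans hMd₂ hy.1, le_trans hy.2 (le_of_lt hd₁B)⟩
  obtain ⟨a, haI, hfix, hmem⟩ := horseshoe (le_of_lt hAd₁) hd₁B hBd₂' hg1 hg2
    hc1cov hc2cov n hn
  refine ⟨a, hfix, ?_⟩
  intro m hm1 hmn heq
  have h1 := (hmem m hm1 hmn).2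
  have h2 := haI.1
  rw [heq] at h1
  linarith

/-- Mirrored assembly: a negative gap (A,B) immediately followed by a positive
gap (B,C), together with `f → +∞` at `-∞`. -/
lemma assemble_neg {f : ℝ → ℝ} (hcont : Continuous f) (hcont' : Continuous (deriv f))
    (hdiff : Differentiable ℝ f) (hz : ∀ x, f x = 0 → deriv f x ≠ 0)
    (htop : Tendsto f atBot atTop)
    {A B C : ℝ} (hAB : A < B) (hBC : B < C)
    (hA : f A = 0) (hB : f B = 0) (hC : f C = 0)
    (hneg : ∀ x ∈ Ioo A B, f x < 0) (hpos : ∀ x ∈ Ioo B C, 0 < f x)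
    {n : ℕ} (hn : 2 ≤ n) :
    ∃ a, (modNewtonFun f)^[n] a = a ∧
      ∀ m, 1 ≤ m → m < n → (modNewtonFun f)^[m] a ≠ a := by
  have hgd := deriv_neg_fun f
  have hbot : Tendsto (fun x => -f x) atBot atBot := tendsto_neg_atTop_atBot.comp htop
  have hz' : ∀ x, (fun x => -f x) x = 0 → deriv (fun x => -f x) x ≠ 0 := by
    intro x hx
    rw [hgd]
    simp only [ne_eq, neg_eq_zero]
    exact hz x (by simpa using hx)
  have := assemble (f := fun x => -f x) hcont.neg (by rw [hgd]; exact hcont'.neg)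
    hdiff.neg hz' hbot hAB hBC (by simp [hA]) (by simp [hB]) (by simp [hC])
    (fun x hx => by simpa using hneg x hx)
    (fun x hx => by simpa using hpos x hx) hn
  rwa [modNewton_neg f] at this

/-- If `f` is a Newton-class function, has infinite limits of opposite signs
at `±∞`, and has at least four real roots, then `M_f` has periodic points of
every prime period. -/
theorem modNewtonFun_periodic_points_of_every_prime_period
    (f : ℝ → ℝ)
    (hf : NewtonClass f)
    (hlim : (Filter.Tendsto f Filter.atTop Filter.atTop ∧
              Filter.Tendsto f Filter.atBot Filter.atBot) ∨
            (Filter.Tendsto f Filter.atTop Filter.atBot ∧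
              Filter.Tendsto f Filter.atBot Filter.atTop))
    (hroots : ∃ r₁ r₂ r₃ r₄ : ℝ, r₁ < r₂ ∧ r₂ < r₃ ∧ r₃ < r₄ ∧
      f r₁ = 0 ∧ f r₂ = 0 ∧ f r₃ = 0 ∧ f r₄ = 0) :
    ∀ n : ℕ, 1 ≤ n → ∃ a : ℝ, (modNewtonFun f)^[n] a = a ∧
      ∀ m : ℕ, 1 ≤ m → m < n → (modNewtonFun f)^[m] a ≠ a := by
  obtain ⟨r₁, r₂, r₃, r₄, h12, h23, h34, hr₁, hr₂, hr₃, hr₄⟩ := hroots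
  obtain ⟨hC2, hz, -⟩ := hf
  have hcont : Continuous f := hC2.continuous
  have hdiff : Differentiable ℝ f := hC2.differentiable (by norm_num)
  have hcont' : Continuous (deriv f) := hC2.continuous_deriv (by norm_num)
  intro n hn
  rcases eq_or_lt_of_le hn with h1 | h2
  · -- n = 1 : any root is a fixed point
    refine ⟨r₁, ?_, ?_⟩
    · rw [← h1]
      simpa using modNewton_fixed f r₁ hr₁
    · intro m hm1 hmn
      exfalso; omega
  · have hn2 : 2 ≤ n := h2
    -- build three consecutive gaps
    obtain ⟨b₁, hb₁l, hb₁r, hb₁root, hgap₁⟩ := gap_next hcont hdiff hz hr₁ hr₂ h12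
    obtain ⟨b₂, hb₂l, hb₂r, hb₂root, hgap₂⟩ :=
      gap_next hcont hdiff hz hb₁root hr₃ (lt_of_le_of_lt hb₁r h23)
    obtain ⟨b₃, hb₃l, hb₃r, hb₃root, hgap₃⟩ :=
      gap_next hcont hdiff hz hb₂root hr₄ (lt_of_le_of_lt hb₂r h34)
    rcases gap_sign hcont hb₁l hgap₁ with hs₁ | hs₁
    · -- first gap positive ; second negative
      have hs₂ : ∀ x ∈ Ioo b₁ b₂, f x < 0 :=
        sign_flip_pos hcont hdiff hb₁l hb₂l hb₁root (hz b₁ hb₁root) hs₁ hgap₂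
      rcases hlim with ⟨-, hbot⟩ | ⟨-, htop⟩
      · exact assemble hcont hcont' hdiff hz hbot hb₁l hb₂l hr₁ hb₁root hb₂root
          hs₁ hs₂ hn2
      · -- need neg-then-pos : use gaps 2 and 3
        have hs₃ : ∀ x ∈ Ioo b₂ b₃, 0 < f x :=
          sign_flip_neg hcont hdiff hb₂l hb₃l hb₂root (hz b₂ hb₂root) hs₂ hgap₃
        exact assemble_neg hcont hcont' hdiff hz htop hb₂l hb₃l hb₁root hb₂root
          hb₃root hs₂ hs₃ hn2
    · -- first gap negative ; second positive
      have hs₂ : ∀ x ∈ Ioo b₁ b₂, 0 < f x :=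
        sign_flip_neg hcont hdiff hb₁l hb₂l hb₁root (hz b₁ hb₁root) hs₁ hgap₂
      rcases hlim with ⟨-, hbot⟩ | ⟨-, htop⟩
      · have hs₃ : ∀ x ∈ Ioo b₂ b₃, f x < 0 :=
          sign_flip_pos hcont hdiff hb₂l hb₃l hb₂root (hz b₂ hb₂root) hs₂ hgap₃
        exact assemble hcont hcont' hdiff hz hbot hb₂l hb₃l hb₁root hb₂root
          hb₃root hs₂ hs₃ hn2
      · exact assemble_neg hcont hcont' hdiff hz htop hb₁l hb₂l hr₁ hb₁root hb₂root
          hs₁ hs₂ hn2
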